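/- arXiv:0707.0966 — 6 statements merged into one kernel-verified Lean document; each statement's English description precedes it below -/
import Mathlib

section
/- Let S be the unilateral shift on ℓ²(ℕ). If T is a bounded idempotent operator on ℓ²(ℕ) commuting with S, then T = 0 or T = I. -/
noncomputable section

private abbrev Hsp := lp (fun _ : ℕ => ℂ) 2

private def ev (m : ℕ) : Hsp →L[ℂ] ℂ :=
  LinearMap.mkContinuous
    { toFun := fun x => x m
      map_add' := fun x y => by simp [lp.coeFn_add]
      map_smul' := fun c x => by simp [lp.coeFn_smul] }
    1 (fun x => by
      show ‖x m‖ ≤ 1 * ‖x‖; simpa using lp.norm_apply_le_norm (by norm_num : (2:ENNReal) ≠ 0) x m)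

@[simp] private lemma ev_apply (m : ℕ) (x : Hsp) : ev m x = x m := rfl

private def e (n : ℕ) : Hsp := lp.single 2 n (1:ℂ)

private lemma e_apply (n m : ℕ) : e n m = if m = n then 1 else 0 := by
  rcases eq_or_ne m n with rfl | h
  · simp [e, lp.single_apply_self (E := fun _ : ℕ => ℂ) 2 m (1:ℂ)]
  · simp [e, lp.single_apply_ne (E := fun _ : ℕ => ℂ) 2 n (1:ℂ) h, h]

set_option linter.unusedSectionVars false


end

section aux

variable (S : Hsp →L[ℂ] Hsp)
    (hS0 : ∀ x : Hsp, S x 0 = 0)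
    (hS : ∀ (x : Hsp) (n : ℕ), S x (n + 1) = x n)

include hS0 hS

private lemma pow_apply_add (n : ℕ) (x : Hsp) (m : ℕ) : (S ^ n) x (n + m) = x m := by
  induction n generalizing m with
  | zero => simp
  | succ k ih =>
    have h1 : (S ^ (k+1)) x = S ((S ^ k) x) := by
      rw [pow_succ']; rfl
    have h2 : k + 1 + m = (k + m) + 1 := by omega
    rw [h1, h2, hS, ih]

private lemma pow_apply_lt (n : ℕ) (x : Hsp) (m : ℕ) (hm : m < n) : (S ^ n) x m = 0 := by
  induction n generalizing m with
  | zero => omega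
  | succ k ih =>
    have h1 : (S ^ (k+1)) x = S ((S ^ k) x) := by
      rw [pow_succ']; rfl
    rw [h1]
    rcases m with _ | j
    · exact hS0 _
    · rw [hS]
      exact ih j (by omega)

private lemma S_e (n : ℕ) : S (e n) = e (n + 1) := by
  apply lp.ext
  funext m
  rcases m with _ | j
  · rw [hS0, e_apply]
    simp
  · rw [hS, e_apply, e_apply]
    rcases eq_or_ne j n with rfl | h
    · simp
    · rw [if_neg h, if_neg (by omega)]

private lemma e_eq_pow (n : ℕ) : e n = (S ^ n) (e 0) := by
  induction n with
  | zero => simp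
  | succ k ih =>
    rw [← S_e S hS0 hS k, ih, pow_succ']
    rfl

end aux

/-- If `S` is the unilateral shift on `ℓ²(ℕ)` (i.e. `(Sx)₀ = 0`,
`(Sx)ₙ₊₁ = xₙ`) and `T` is a bounded idempotent commuting with `S`, then `T = 0` or `T = I`. -/
theorem idempotent_commuting_with_shift
    (S : lp (fun _ : ℕ => ℂ) 2 →L[ℂ] lp (fun _ : ℕ => ℂ) 2)
    (hS0 : ∀ x : lp (fun _ : ℕ => ℂ) 2, S x 0 = 0)
    (hS : ∀ (x : lp (fun _ : ℕ => ℂ) 2) (n : ℕ), S x (n + 1) = x n)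
    (T : lp (fun _ : ℕ => ℂ) 2 →L[ℂ] lp (fun _ : ℕ => ℂ) 2)
    (hT : T.comp T = T) (hTS : T.comp S = S.comp T) :
    T = 0 ∨ T = ContinuousLinearMap.id ℂ (lp (fun _ : ℕ => ℂ) 2) := by
  haveI : Fact ((1:ENNReal) ≤ 2) := ⟨one_le_two⟩
  have hTT : ∀ x, T (T x) = T x := fun x => by rw [← ContinuousLinearMap.comp_apply, hT]
  have hTSx : ∀ x, T (S x) = S (T x) := fun x => by
    rw [← ContinuousLinearMap.comp_apply, hTS]; rfl
  -- T commutes with powers of S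
  have hTpow : ∀ (n : ℕ) (x : Hsp), T ((S ^ n) x) = (S ^ n) (T x) := by
    intro n
    induction n with
    | zero => intro x; simp
    | succ k ih =>
      intro x
      have h1 : ∀ y : Hsp, (S ^ (k+1)) y = S ((S ^ k) y) := by
        intro y; rw [pow_succ']; rfl
      rw [h1, hTSx, ih, h1]
  set f : Hsp := T (e 0) with hf
  set c : ℂ := f 0 with hc
  -- T (e n) = S^n f
  have hTe : ∀ n, T (e n) = (S ^ n) f := by
    intro n
    rw [e_eq_pow S hS0 hS n, hTpow]
  -- basis expansion
  have hbasis : ∀ x : Hsp, HasSum (fun n => x n • e n) x := by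
    intro x
    have h := lp.hasSum_single (E := fun _ : ℕ => ℂ) (p := 2) (by norm_num) x
    convert h using 2 with n
    rw [show x n • e n = lp.single 2 n (x n • (1:ℂ)) from (lp.single_smul 2 n (x n) 1).symm]
    norm_num
  -- convolution identity
  have conv : ∀ m : ℕ, ∑ n ∈ Finset.range (m + 1), f n * f (m - n) = f m := by
    intro m
    have h1 : HasSum (fun n => f n • T (e n)) (T f) := by
      simpa using (T.hasSum (hbasis f))
    rw [hTT] at h1
    have h2 : HasSum (fun n => (f n * (S ^ n) f m : ℂ)) (f m) := by
      have := (ev m).hasSum h1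
      simpa [hTe, lp.coeFn_smul, smul_eq_mul] using this
    have h3 : ∀ n ∉ Finset.range (m + 1), (f n * (S ^ n) f m : ℂ) = 0 := by
      intro n hn
      rw [pow_apply_lt S hS0 hS n f m (by simpa using hn), mul_zero]
    have h4 := (hasSum_sum_of_ne_finset_zero h3).unique h2
    rw [← h4]
    apply Finset.sum_congr rfl
    intro n hn
    congr 1
    have hnm : n ≤ m := by simpa [Nat.lt_succ_iff] using hn
    have h5 := pow_apply_add S hS0 hS n f (m - n)
    rw [show n + (m - n) = m from by omega] at h5
    rw [h5]
  -- c is 0 or 1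
  have hcc : c * c = c := by simpa using conv 0
  have hc01 : c = 0 ∨ c = 1 := by
    have : c * (c - 1) = 0 := by linear_combination hcc
    rcases mul_eq_zero.mp this with h | h
    · exact Or.inl h
    · exact Or.inr (sub_eq_zero.mp h)
  -- f m = 0 for m ≥ 1
  have hf0 : ∀ m, 1 ≤ m → f m = 0 := by
    intro m
    induction m using Nat.strong_induction_on with
    | _ m ih =>
      intro hm
      obtain ⟨k, rfl⟩ : ∃ k, m = k + 1 := ⟨m - 1, by omega⟩
      have h := conv (k + 1)
      rw [Finset.sum_range_succ, Finset.sum_range_succ'] at h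
      have hmid : ∀ i ∈ Finset.range k, f (i + 1) * f (k + 1 - (i + 1)) = 0 := by
        intro i hi
        have hik := Finset.mem_range.mp hi
        rw [ih (i + 1) (by omega) (by omega), zero_mul]
      rw [Finset.sum_congr rfl hmid] at h
      simp only [Finset.sum_const_zero, zero_add, Nat.sub_self, Nat.sub_zero] at h
      rcases hc01 with h0 | h1
      · rw [← hc, h0] at h
        linear_combination -h
      · rw [← hc, h1] at h
        linear_combination h
  -- f = c • e 0
  have hfc : f = c • e 0 := by
    apply lp.ext
    funext m
    have hm : (c • e 0 : Hsp) m = c * e 0 m := by rw [lp.coeFn_smul]; rfl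
    show f m = (c • e 0 : Hsp) m
    rcases m with _ | j
    · rw [hm, e_apply]
      simp [hc]
    · rw [hm, e_apply, hf0 (j+1) (by omega)]
      simp
  -- T x = c • x
  have hTx : ∀ x : Hsp, T x = c • x := by
    intro x
    have h1 : HasSum (fun n => x n • T (e n)) (T x) := by
      simpa using (T.hasSum (hbasis x))
    have h2 : ∀ n, x n • T (e n) = c • (x n • e n) := by
      intro n
      rw [hTe, hfc, map_smul, ← e_eq_pow S hS0 hS n, smul_comm]
    rw [funext h2] at h1
    exact h1.unique ((hbasis x).const_smul c)
  rcases hc01 with h0 | h1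
  · left
    ext x
    simp [hTx x, h0]
  · right
    ext x
    simp [hTx x, h1]
end

section
/- The Hilbert representation of the loop quiver (one vertex, one arrow) given by H₁ = ℓ²(ℕ) and f_α = S the unilateral shift is an infinite-dimensional indecomposable Hilbert representation. -/
open scoped ENNReal

noncomputable def evalCLM (m : ℕ) : lp (fun _ : ℕ => ℂ) 2 →L[ℂ] ℂ :=
  LinearMap.mkContinuous
    { toFun := fun x => x m
      map_add' := fun x y => rfl
      map_smul' := fun c x => rfl }
    1 (fun x => by
      rw [one_mul]; exact lp.norm_apply_le_norm (by norm_num : (2 : ℝ≥0∞) ≠ 0) x m)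

@[simp] lemma evalCLM_apply (m : ℕ) (x : lp (fun _ : ℕ => ℂ) 2) :
    evalCLM m x = x m := rfl

lemma single_coord (n m : ℕ) (c : ℂ) :
    (lp.single (E := fun _ : ℕ => ℂ) 2 n c) m = if m = n then c else 0 := by
  by_cases h : m = n
  · subst h; rw [lp.single_apply_self, if_pos rfl]
  · rw [lp.single_apply_ne _ _ _ h, if_neg h]

/-- The Hilbert representation of the loop quiver (one vertex, one arrow)
given by `H₁ = ℓ²(ℕ)` and `f_α = S` the unilateral shift is infinite dimensional and
indecomposable (equivalently: every bounded idempotent commuting with `S` is `0` or `I`). -/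
theorem shift_loop_representation_indecomposable
    (S : lp (fun _ : ℕ => ℂ) 2 →L[ℂ] lp (fun _ : ℕ => ℂ) 2)
    (hS0 : ∀ x : lp (fun _ : ℕ => ℂ) 2, S x 0 = 0)
    (hS : ∀ (x : lp (fun _ : ℕ => ℂ) 2) (n : ℕ), S x (n + 1) = x n) :
    ¬ FiniteDimensional ℂ (lp (fun _ : ℕ => ℂ) 2) ∧
      ∀ T : lp (fun _ : ℕ => ℂ) 2 →L[ℂ] lp (fun _ : ℕ => ℂ) 2,
        T.comp T = T → T.comp S = S.comp T →
        T = 0 ∨ T = ContinuousLinearMap.id ℂ (lp (fun _ : ℕ => ℂ) 2) := by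
  have hSinj : Function.Injective S := by
    intro x y h
    apply lp.ext; funext n
    have := congrArg (fun z : lp (fun _ : ℕ => ℂ) 2 => z (n + 1)) h
    simpa [hS] using this
  have hSnsurj : ¬ Function.Surjective S := by
    intro h
    obtain ⟨x, hx⟩ := h (lp.single 2 0 1)
    have h0 : S x 0 = (lp.single (E := fun _ : ℕ => ℂ) 2 (0:ℕ) (1:ℂ)) 0 := by rw [hx]
    rw [hS0, single_coord] at h0
    simp at h0
  constructor
  · intro hfd
    exact hSnsurj
      ((LinearMap.injective_iff_surjective
        (f := (S : lp (fun _ : ℕ => ℂ) 2 →ₗ[ℂ] lp (fun _ : ℕ => ℂ) 2))).mp hSinj)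
  intro T hT2 hTS
  have hcomm : ∀ x, T (S x) = S (T x) := fun x =>
    congrFun (congrArg DFunLike.coe hTS) x
  set e : ℕ → lp (fun _ : ℕ => ℂ) 2 := fun n => lp.single 2 n (1 : ℂ) with he
  have hecoord : ∀ n m, e n m = if m = n then 1 else 0 := fun n m => single_coord n m 1
  have hSe : ∀ n, S (e n) = e (n + 1) := by
    intro n
    apply lp.ext; funext m
    match m with
    | 0 => rw [hS0]; rw [hecoord]; rw [if_neg (by omega)]
    | (k+1) =>
      rw [hS, hecoord, hecoord]
      by_cases hk : k = n
      · rw [if_pos hk, if_pos (by omega)]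
      · rw [if_neg hk, if_neg (by omega)]
  set a : ℕ → ℂ := fun k => T (e 0) k with ha
  have hTen : ∀ n m, T (e n) m = if n ≤ m then a (m - n) else 0 := by
    intro n
    induction n with
    | zero => intro m; simp [ha]
    | succ n ih =>
      intro m
      rw [← hSe n, hcomm]
      match m with
      | 0 => rw [hS0, if_neg (by omega)]
      | (k+1) =>
        rw [hS, ih k]
        by_cases h : n ≤ k
        · rw [if_pos h, if_pos (by omega)]
          congr 1; omega
        · rw [if_neg h, if_neg (by omega)]
  have hkey : ∀ (x : lp (fun _ : ℕ => ℂ) 2) (m : ℕ),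
      T x m = ∑ n ∈ Finset.range (m + 1), x n * a (m - n) := by
    intro x m
    have h1 : HasSum (fun n => lp.single 2 n (x n)) x :=
      lp.hasSum_single (by norm_num) x
    have h2 : HasSum (fun n => (evalCLM m).comp T (lp.single 2 n (x n)))
        ((evalCLM m).comp T x) := h1.mapL _
    have h3 : ∀ n, (evalCLM m).comp T (lp.single 2 n (x n)) =
        (if n ≤ m then x n * a (m - n) else 0) := by
      intro n
      have hsg : lp.single (E := fun _ : ℕ => ℂ) 2 n (x n) = x n • e n := by
        show _ = x n • lp.single (E := fun _ : ℕ => ℂ) 2 n (1:ℂ)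
        rw [← lp.single_smul (E := fun _ : ℕ => ℂ) 2 n (x n) (1:ℂ), smul_eq_mul, mul_one]
      rw [hsg, map_smul, smul_eq_mul, ContinuousLinearMap.comp_apply, evalCLM_apply,
        hTen n m]
      split <;> simp
    rw [funext h3] at h2
    have h4 : HasSum (fun n => if n ≤ m then x n * a (m - n) else 0)
        (∑ n ∈ Finset.range (m + 1), if n ≤ m then x n * a (m - n) else 0) := by
      apply hasSum_sum_of_ne_finset_zero
      intro n hn
      rw [Finset.mem_range] at hn
      rw [if_neg (by omega)]
    have h5 := h2.unique h4
    rw [ContinuousLinearMap.comp_apply, evalCLM_apply] at h5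
    rw [h5]
    refine Finset.sum_congr rfl fun n hn => ?_
    rw [Finset.mem_range] at hn
    rw [if_pos (by omega)]
  have hconv : ∀ m, a m = ∑ n ∈ Finset.range (m + 1), a n * a (m - n) := by
    intro m
    have hTT : T (T (e 0)) = T (e 0) := by
      have := congrFun (congrArg DFunLike.coe hT2) (e 0)
      simpa using this
    have h := congrArg (fun z : lp (fun _ : ℕ => ℂ) 2 => z m) hTT
    simp only at h
    rw [hkey (T (e 0)) m] at h
    exact h.symm
  have ha0 : a 0 * a 0 = a 0 := by
    have := hconv 0
    simpa using this.symm
  have hfac : a 0 * (a 0 - 1) = 0 := by ring_nf; linear_combination ha0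
  rcases mul_eq_zero.mp hfac with h0 | h1'
  on_goal 2 => have h1 : a 0 = 1 := by linear_combination h1'
  · -- a 0 = 0, show a = 0, T = 0
    left
    have haz : ∀ m, a m = 0 := by
      intro m
      induction m using Nat.strong_induction_on with
      | _ m ih =>
        rw [hconv m]
        apply Finset.sum_eq_zero
        intro n hn
        rw [Finset.mem_range] at hn
        by_cases hnm : n = m
        · subst hnm
          rw [Nat.sub_self, h0, mul_zero]
        · rw [ih n (by omega), zero_mul]
    refine ContinuousLinearMap.ext fun x => ?_
    have : ∀ m, T x m = 0 := by
      intro m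
      rw [hkey]
      apply Finset.sum_eq_zero
      intro n _
      rw [haz, mul_zero]
    apply lp.ext; funext m
    simpa using this m
  · -- a 0 = 1, show a m = 0 for m ≥ 1, T = id
    right
    have haz : ∀ m, 0 < m → a m = 0 := by
      intro m
      induction m using Nat.strong_induction_on with
      | _ m ih =>
        intro hm
        have h := hconv m
        have hsub : ({0, m} : Finset ℕ) ⊆ Finset.range (m + 1) := by
          intro n hn
          rw [Finset.mem_insert, Finset.mem_singleton] at hn
          rw [Finset.mem_range]; omega
        have hzero : ∀ n ∈ Finset.range (m + 1), n ∉ ({0, m} : Finset ℕ) →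
            a n * a (m - n) = 0 := by
          intro n hn hn'
          rw [Finset.mem_range] at hn
          rw [Finset.mem_insert, Finset.mem_singleton] at hn'
          push_neg at hn'
          rw [ih n (by omega) (by omega), zero_mul]
        rw [← Finset.sum_subset hsub hzero,
          Finset.sum_pair (by omega : (0:ℕ) ≠ m), Nat.sub_zero, Nat.sub_self,
          h1, one_mul, mul_one] at h
        exact right_eq_add.mp h
    refine ContinuousLinearMap.ext fun x => ?_
    apply lp.ext; funext m
    have hxm : T x m = x m := by
      rw [hkey]
      have hsub : ({m} : Finset ℕ) ⊆ Finset.range (m + 1) := by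
        intro n hn
        rw [Finset.mem_singleton] at hn
        rw [Finset.mem_range]; omega
      have hzero : ∀ n ∈ Finset.range (m + 1), n ∉ ({m} : Finset ℕ) →
          x n * a (m - n) = 0 := by
        intro n hn hn'
        rw [Finset.mem_range] at hn
        rw [Finset.mem_singleton] at hn'
        rw [haz (m - n) (by omega), mul_zero]
      rw [← Finset.sum_subset hsub hzero, Finset.sum_singleton, Nat.sub_self,
        h1, mul_one]
    simpa using hxm
end

section
/- Let Γ be a finite quiver and v a sink. If a Hilbert representation (H,f) is closed at v, then (H,f) ≅ Φ_v⁻(Φ_v⁺(H,f)) ⊕ (H̃, f̃), where H̃_v = (Im h_v)^⊥, H̃_u = 0 for u ≠ v, and f̃ = 0, with h_v : ⊕_{α∈E^v} H_{s(α)} → H_v given by h_v((x_α)_α) = Σ_α f_α(x_α). -/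
set_option synthInstance.maxHeartbeats 1000000
set_option maxHeartbeats 2000000

private lemma eqrec_zero_aux {V : Type} (H : V → Type) [∀ u, NormedAddCommGroup (H u)]
    {w u : V} (e : w = u) : (e ▸ (0 : H w) : H u) = 0 := by subst e; rfl


/-- Let `v` be a sink of a finite quiver and `(H,f)` a Hilbert
representation that is closed at `v`.  With `h_v : ⊕₂_{α ∈ Eᵛ} H_{s(α)} → H_v`,
`h_v((x_α)) = Σ f_α(x_α)`, one has `(H,f) ≅ Φᵥ⁻(Φᵥ⁺(H,f)) ⊕ (H̃,f̃)`, where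
`Φᵥ⁻(Φᵥ⁺(H,f))` has vertex space `(Ker h_v)^⊥` at `v` with arrow operators
`P_{(Ker h_v)^⊥} ∘ j_α` for `α ∈ Eᵛ` (other data unchanged), and `H̃` is concentrated at `v`
with space `(Im h_v)^⊥` and zero operators. -/
theorem reflection_decomposition_at_closed_sink
    {V E : Type} [Fintype V] [Fintype E] [DecidableEq V] [DecidableEq E] (s r : E → V)
    (H : V → Type) [∀ u, NormedAddCommGroup (H u)] [∀ u, InnerProductSpace ℂ (H u)]
    [∀ u, CompleteSpace (H u)]
    (f : ∀ e, H (s e) →L[ℂ] H (r e)) (v : V)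
    (hsink : ∀ e, s e ≠ v)
    (h : PiLp 2 (fun a : {e : E // r e = v} => H (s a.1)) →L[ℂ] H v)
    (hh : ∀ x, h x = ∑ a : {e : E // r e = v}, (a.2 ▸ (f a.1 (x a)) : H v))
    (hclosed : IsClosed (LinearMap.range h.toLinearMap : Set (H v))) :
    ∃ (φ : ∀ u, H u ≃L[ℂ] H u)
      (φv : H v ≃L[ℂ] WithLp 2 (↥((LinearMap.ker h.toLinearMap)ᗮ) × ↥((LinearMap.range h.toLinearMap)ᗮ))),
      (∀ (a : {e : E // r e = v}) (x : H (s a.1)),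
        ((WithLp.equiv 2 _) (φv (a.2 ▸ (f a.1 x) : H v))).2 = 0 ∧
        ((WithLp.equiv 2 (∀ b : {e : E // r e = v}, H (s b.1))).symm (Pi.single a (φ (s a.1) x)) -
            (((WithLp.equiv 2 _) (φv (a.2 ▸ (f a.1 x) : H v))).1 :
              PiLp 2 (fun a : {e : E // r e = v} => H (s a.1)))) ∈ LinearMap.ker h.toLinearMap) ∧
      ∀ e : E, r e ≠ v → ∀ x, φ (r e) (f e x) = f e (φ (s e) x) := by
  haveI : CompleteSpace (PiLp 2 fun a : {e : E // r e = v} => H (s a.1)) :=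
    inferInstance
  set K : Submodule ℂ (PiLp 2 (fun a : {e : E // r e = v} => H (s a.1))) :=
    (LinearMap.ker h.toLinearMap)ᗮ with hKdef
  haveI : CompleteSpace (LinearMap.range h.toLinearMap : Submodule ℂ (H v)) := hclosed.completeSpace_coe
  haveI : CompleteSpace (LinearMap.ker h.toLinearMap : Submodule ℂ _) :=
    (ContinuousLinearMap.isClosed_ker h).completeSpace_coe
  haveI : CompleteSpace K := (Submodule.isClosed_orthogonal _).completeSpace_coe
  haveI : CompleteSpace ((LinearMap.range h.toLinearMap)ᗮ : Submodule ℂ (H v)) :=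
    (Submodule.isClosed_orthogonal _).completeSpace_coe
  have hKorth : Kᗮ = LinearMap.ker h.toLinearMap := Submodule.orthogonal_orthogonal _
  -- the map ψ : WithLp 2 (K × Rᗮ) → H v, (p, q) ↦ h p + q
  set ψ : WithLp 2 (↥K × ↥(LinearMap.range h.toLinearMap)ᗮ) →L[ℂ] H v :=
    (((h.comp K.subtypeL).coprod (LinearMap.range h.toLinearMap)ᗮ.subtypeL).comp
      (WithLp.prodContinuousLinearEquiv 2 ℂ ↥K ↥(LinearMap.range h.toLinearMap)ᗮ).toContinuousLinearMap)
    with hψdef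
  have hψapp : ∀ z : WithLp 2 (↥K × ↥(LinearMap.range h.toLinearMap)ᗮ),
      ψ z = h (z.fst : PiLp 2 _) + (z.snd : H v) := fun z => rfl
  have hker : LinearMap.ker ψ.toLinearMap = ⊥ := by
    rw [LinearMap.ker_eq_bot']
    intro z hz
    rw [ContinuousLinearMap.coe_coe, hψapp] at hz
    have h2 : h (z.fst : PiLp 2 _) = -(z.snd : H v) := by
      rw [eq_neg_iff_add_eq_zero]; exact hz
    have hmem : h (z.fst : PiLp 2 _) ∈ (LinearMap.range h.toLinearMap) ⊓ (LinearMap.range h.toLinearMap)ᗮ := by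
      refine ⟨LinearMap.mem_range_self h.toLinearMap _, ?_⟩
      rw [h2]; exact neg_mem z.snd.2
    rw [Submodule.inf_orthogonal_eq_bot, Submodule.mem_bot] at hmem
    have hz2 : (z.snd : H v) = 0 := by rw [hmem] at h2; exact (neg_eq_zero.mp h2.symm)
    have hz1 : (z.fst : PiLp 2 _) ∈ LinearMap.ker h.toLinearMap ⊓ (LinearMap.ker h.toLinearMap)ᗮ := ⟨hmem, z.fst.2⟩
    rw [Submodule.inf_orthogonal_eq_bot, Submodule.mem_bot] at hz1
    cases z; exact congrArg (WithLp.toLp 2) (Prod.ext (Subtype.ext hz1) (Subtype.ext hz2))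
  have hrange : LinearMap.range ψ.toLinearMap = ⊤ := by
    rw [LinearMap.range_eq_top]
    intro y
    obtain ⟨z, hz⟩ := (Submodule.orthogonalProjectionOnto (LinearMap.range h.toLinearMap) y).2
    set p := Submodule.orthogonalProjectionOnto K (z : PiLp 2 _) with hp
    have hdiff : (z : PiLp 2 _) - (p : PiLp 2 _) ∈ LinearMap.ker h.toLinearMap := by
      rw [← hKorth]; exact Submodule.sub_starProjection_mem_orthogonal _
    have hhp : h (p : PiLp 2 _) = (Submodule.orthogonalProjectionOnto (LinearMap.range h.toLinearMap) y : H v) := by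
      have := LinearMap.mem_ker.mp hdiff
      rw [map_sub] at this
      rw [sub_eq_zero, ContinuousLinearMap.coe_coe] at this
      rw [← this]; exact hz
    refine ⟨(WithLp.toLp 2 (p, Submodule.orthogonalProjectionOnto (LinearMap.range h.toLinearMap)ᗮ y) :
      WithLp 2 (↥K × ↥(LinearMap.range h.toLinearMap)ᗮ)), ?_⟩
    rw [ContinuousLinearMap.coe_coe, hψapp]
    simp only [WithLp.toLp_fst, WithLp.toLp_snd, hhp]
    exact Submodule.starProjection_add_starProjection_orthogonal y
  set e := ContinuousLinearEquiv.ofBijective ψ hker hrange with hedef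
  refine ⟨fun u => ContinuousLinearEquiv.refl ℂ (H u), e.symm, ?_, ?_⟩
  · intro a x
    set y : H v := a.2 ▸ (f a.1 x) with hy
    set inp : PiLp 2 (fun b : {e : E // r e = v} => H (s b.1)) :=
      (WithLp.equiv 2 (∀ b : {e : E // r e = v}, H (s b.1))).symm (Pi.single a x) with hinp
    have hinp_app : ∀ b, inp b = Pi.single (M := fun b : {e : E // r e = v} => H (s b.1)) a x b := fun b => rfl
    have hhy : h inp = y := by
      rw [hh]
      rw [Finset.sum_eq_single a]
      · rw [hinp_app, Pi.single_eq_same]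
      · intro b _ hb
        rw [hinp_app, Pi.single_eq_of_ne hb, map_zero]
        exact eqrec_zero_aux H b.2
      · intro hb; exact absurd (Finset.mem_univ a) hb
    set p := Submodule.orthogonalProjectionOnto K inp with hp
    have hdiff : inp - (p : PiLp 2 _) ∈ LinearMap.ker h.toLinearMap := by
      rw [← hKorth]; exact Submodule.sub_starProjection_mem_orthogonal _
    have hey : e.symm y = (WithLp.toLp 2 (p, 0) : WithLp 2 (↥K × ↥(LinearMap.range h.toLinearMap)ᗮ)) := by
      rw [ContinuousLinearEquiv.symm_apply_eq]
      have : e (WithLp.toLp 2 (p, 0) : WithLp 2 (↥K × ↥(LinearMap.range h.toLinearMap)ᗮ)) =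
          ψ (WithLp.toLp 2 (p, 0) : WithLp 2 (↥K × ↥(LinearMap.range h.toLinearMap)ᗮ)) := rfl
      rw [this, hψapp]
      have := LinearMap.mem_ker.mp hdiff
      rw [map_sub, sub_eq_zero, ContinuousLinearMap.coe_coe] at this
      simp only [WithLp.toLp_fst, WithLp.toLp_snd, ZeroMemClass.coe_zero, add_zero]
      rw [← this, hhy]
    constructor
    · rw [hey]; rfl
    · have h1 : ((WithLp.equiv 2 (↥K × ↥(LinearMap.range h.toLinearMap)ᗮ)) (e.symm y)).1 = p := by
        rw [hey]; rfl
      rw [h1]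
      exact hdiff
  · intro a _ x
    rfl
end

section
/- Let Γ be a finite quiver and v a sink. If a Hilbert representation (H,f) of Γ is full at v (i.e., Σ_{α∈E^v} Im f_α = H_v), then (H,f) ≅ Φ_v⁻(Φ_v⁺(H,f)). -/
set_option synthInstance.maxHeartbeats 1000000
set_option maxHeartbeats 1000000

/-- **Duality theorem at a sink.** Let `v` be a sink of a finite quiver and
`(H,f)` a Hilbert representation that is full at `v` (the operator
`h_v : ⊕₂_{α ∈ Eᵛ} H_{s(α)} → H_v`, `h_v((x_α)) = Σ f_α(x_α)`, is onto).  Then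
`(H,f) ≅ Φᵥ⁻(Φᵥ⁺(H,f))`, the latter having vertex space `(Ker h_v)^⊥` at `v` with arrow
operators `P_{(Ker h_v)^⊥} ∘ j_α` for `α ∈ Eᵛ`, other data unchanged. -/
theorem duality_at_full_sink
    {V E : Type} [Fintype V] [Fintype E] [DecidableEq V] [DecidableEq E] (s r : E → V)
    (H : V → Type) [∀ u, NormedAddCommGroup (H u)] [∀ u, InnerProductSpace ℂ (H u)]
    [∀ u, CompleteSpace (H u)]
    (f : ∀ e, H (s e) →L[ℂ] H (r e)) (v : V)
    (hsink : ∀ e, s e ≠ v)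
    (h : PiLp 2 (fun a : {e : E // r e = v} => H (s a.1)) →L[ℂ] H v)
    (hh : ∀ x, h x = ∑ a : {e : E // r e = v}, (a.2 ▸ (f a.1 (x a)) : H v))
    (hfull : LinearMap.range h.toLinearMap = ⊤) :
    ∃ (φ : ∀ u, H u ≃L[ℂ] H u) (φv : H v ≃L[ℂ] ↥((LinearMap.ker h.toLinearMap)ᗮ)),
      (∀ (a : {e : E // r e = v}) (x : H (s a.1)),
        ((WithLp.equiv 2 (∀ b : {e : E // r e = v}, H (s b.1))).symm
            (Pi.single a (φ (s a.1) x)) -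
          (φv (a.2 ▸ (f a.1 x) : H v) :
            PiLp 2 (fun a : {e : E // r e = v} => H (s a.1)))) ∈ LinearMap.ker h.toLinearMap) ∧
      ∀ e : E, r e ≠ v → ∀ x, φ (r e) (f e x) = f e (φ (s e) x) := by
  haveI : CompleteSpace (PiLp 2 (fun a : {e : E // r e = v} => H (s a.1))) :=
    inferInstance
  haveI : CompleteSpace (LinearMap.ker h.toLinearMap) := h.isClosed_ker.completeSpace_coe
  -- the restriction of h to (ker h)ᗮ
  set K : Submodule ℂ (PiLp 2 (fun a : {e : E // r e = v} => H (s a.1))) :=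
    (LinearMap.ker h.toLinearMap)ᗮ with hK
  haveI : CompleteSpace K := (Submodule.isClosed_orthogonal _).completeSpace_coe
  let g : K →L[ℂ] H v := h.comp K.subtypeL
  have hginj : LinearMap.ker g.toLinearMap = ⊥ := by
    rw [LinearMap.ker_eq_bot']
    rintro ⟨m, hm⟩ hgm
    have : m ∈ LinearMap.ker h.toLinearMap ⊓ (LinearMap.ker h.toLinearMap)ᗮ :=
      ⟨by simpa [g] using hgm, hm⟩
    rw [Submodule.inf_orthogonal_eq_bot] at this
    simpa using this
  have hgsurj : LinearMap.range g.toLinearMap = ⊤ := by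
    rw [LinearMap.range_eq_top]
    intro y
    obtain ⟨x, hx⟩ := LinearMap.range_eq_top.mp hfull y
    obtain ⟨k, hk, p, hp, hkp⟩ :=
      Submodule.exists_add_mem_mem_orthogonal (K := LinearMap.ker h.toLinearMap) x
    refine ⟨⟨p, hp⟩, ?_⟩
    have : h x = h p := by
      rw [hkp, map_add, show h k = 0 from hk, zero_add]
    simp [g, ← this, show h x = y from hx]
  let ge : K ≃L[ℂ] H v := ContinuousLinearEquiv.ofBijective g hginj hgsurj
  refine ⟨fun u => ContinuousLinearEquiv.refl ℂ (H u), ge.symm, ?_, ?_⟩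
  · intro a x
    rw [LinearMap.mem_ker]
    have key : ∀ (y : PiLp 2 (fun a : {e : E // r e = v} => H (s a.1))),
        h (y - (ge.symm (h y) : PiLp 2 (fun a : {e : E // r e = v} => H (s a.1)))) = 0 := by
      intro y
      have : h (ge.symm (h y) : PiLp 2 (fun a : {e : E // r e = v} => H (s a.1)))
          = g (ge.symm (h y)) := rfl
      rw [map_sub, this]
      have : g (ge.symm (h y)) = ge (ge.symm (h y)) := rfl
      rw [this, ContinuousLinearEquiv.apply_symm_apply, sub_self]
    set y : PiLp 2 (fun a : {e : E // r e = v} => H (s a.1)) :=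
      (WithLp.equiv 2 (∀ b : {e : E // r e = v}, H (s b.1))).symm (Pi.single a x) with hy
    have hyval : h y = (a.2 ▸ (f a.1 x) : H v) := by
      rw [hh]
      rw [Fintype.sum_eq_single a]
      · congr 1
        simp [y, hy]
      · intro b hb
        have hb0 : y b = 0 := by
          simp [y, hy, Pi.single_eq_of_ne hb]
        rw [hb0]
        obtain ⟨e, he⟩ := b
        subst he
        simp
    have := key y
    rwa [hyval] at this
  · intro e _ x
    rfl
end

section
/- Let Γ be a finite quiver and v a source. If a Hilbert representation (H,f) of Γ is co-full at v (i.e., Σ_{α∈E_v} Im f_α* = H_v), then (H,f) ≅ Φ_v⁺(Φ_v⁻(H,f)). -/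
set_option synthInstance.maxHeartbeats 400000

/-- A finite `ℓ²`-direct sum of complete spaces is complete. -/
instance piLp_completeSpace {p : ENNReal} {ι : Type} (H : ι → Type)
    [∀ i, NormedAddCommGroup (H i)] [∀ i, CompleteSpace (H i)] : CompleteSpace (PiLp p H) :=
  (PiLp.uniformEquiv p H).completeSpace_iff.2 inferInstance

/-- **Duality theorem at a source.** Let `v` be a source of a finite quiver and
`(H,f)` a Hilbert representation that is co-full at `v` (the adjoint of
`ĥ_v : H_v → ⊕₂_{α ∈ E_v} H_{r(α)}`, `ĥ_v(x) = (f_α(x))_α`, is onto, i.e.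
`Σ_{α ∈ E_v} Im f_α* = H_v`).  Then `(H,f) ≅ Φᵥ⁺(Φᵥ⁻(H,f))`, the latter having vertex space
`((Im ĥ_v)^⊥)^⊥` at `v`, with the arrow operator for `α ∈ E_v` given by the `α`-th coordinate
projection, other data unchanged. -/
theorem duality_at_cofull_source
    {V E : Type} [Fintype V] [Fintype E] [DecidableEq V] [DecidableEq E] (s r : E → V)
    (H : V → Type) [∀ u, NormedAddCommGroup (H u)] [∀ u, InnerProductSpace ℂ (H u)]
    [∀ u, CompleteSpace (H u)]
    (f : ∀ e, H (s e) →L[ℂ] H (r e)) (v : V)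
    (hsource : ∀ e, r e ≠ v)
    (hhat : H v →L[ℂ] PiLp 2 (fun a : {e : E // s e = v} => H (r a.1)))
    (hhh : ∀ (x : H v) (a : {e : E // s e = v}), hhat x a = f a.1 (a.2.symm ▸ x : H (s a.1)))
    (hcofull : LinearMap.range (ContinuousLinearMap.adjoint hhat).toLinearMap = ⊤) :
    ∃ (φ : ∀ u, H u ≃L[ℂ] H u) (φv : H v ≃L[ℂ] ↥(((LinearMap.range hhat.toLinearMap)ᗮ)ᗮ)),
      (∀ (x : H v) (a : {e : E // s e = v}),
        (φv x : PiLp 2 (fun a : {e : E // s e = v} => H (r a.1))) a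
          = φ (r a.1) (f a.1 (a.2.symm ▸ x : H (s a.1)))) ∧
      ∀ e : E, s e ≠ v → ∀ x, φ (r e) (f e x) = f e (φ (s e) x) := by
  classical
  have hsurj : Function.Surjective (ContinuousLinearMap.adjoint hhat) :=
    LinearMap.range_eq_top.mp hcofull
  obtain ⟨C, Cpos, hC⟩ := (ContinuousLinearMap.adjoint hhat).exists_preimage_norm_le hsurj
  have hbb : ∀ x : H v, ‖x‖ ≤ C * ‖hhat x‖ := by
    intro x
    obtain ⟨z, hz, hzn⟩ := hC x
    have key : ‖x‖ ^ 2 ≤ C * ‖hhat x‖ * ‖x‖ := by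
      calc ‖x‖ ^ 2 = ‖(inner ℂ x x : ℂ)‖ := by
            rw [inner_self_eq_norm_sq_to_K]
            simp
        _ = ‖(inner ℂ z (hhat x) : ℂ)‖ := by
            rw [← hz, ContinuousLinearMap.adjoint_inner_left]
        _ ≤ ‖z‖ * ‖hhat x‖ := norm_inner_le_norm _ _
        _ ≤ C * ‖x‖ * ‖hhat x‖ := by
            gcongr
        _ = C * ‖hhat x‖ * ‖x‖ := by ring
    rcases eq_or_ne x 0 with rfl | hx
    · simp [mul_nonneg Cpos.le (norm_nonneg _)]
    · have hxp : 0 < ‖x‖ := norm_pos_iff.mpr hx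
      have := (mul_le_mul_iff_left₀ hxp).mp (by simpa [pow_two] using key)
      exact this
  have hinj : Function.Injective hhat := by
    intro a b hab
    have : ‖a - b‖ ≤ C * ‖hhat (a - b)‖ := hbb _
    rw [map_sub, hab, sub_self, norm_zero, mul_zero] at this
    have hz0 : ‖a - b‖ = 0 := le_antisymm this (norm_nonneg _)
    simpa [sub_eq_zero] using norm_eq_zero.mp hz0
  have hanti : AntilipschitzWith C.toNNReal hhat :=
    hhat.antilipschitz_of_bound (by intro x; simpa [Real.coe_toNNReal _ Cpos.le] using hbb x)
  have hclosed : IsClosed (Set.range hhat) :=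
    hanti.isClosed_range hhat.uniformContinuous
  set K : Submodule ℂ (PiLp 2 (fun a : {e : E // s e = v} => H (r a.1))) :=
    ((LinearMap.range hhat.toLinearMap)ᗮ)ᗮ with hK
  have hKeq : K = LinearMap.range hhat.toLinearMap := by
    rw [hK, Submodule.orthogonal_orthogonal_eq_closure]
    apply SetLike.ext'
    rw [Submodule.topologicalClosure_coe]
    exact (by simpa [Set.range] using hclosed : IsClosed
      ((LinearMap.range hhat.toLinearMap : Submodule ℂ _) : Set _)).closure_eq
  have hmem : ∀ x, hhat x ∈ K :=
    fun x => hKeq ▸ LinearMap.mem_range_self _ x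
  haveI : CompleteSpace ↥K := (Submodule.isClosed_orthogonal _).completeSpace_coe
  set g : H v →L[ℂ] ↥K := hhat.codRestrict K hmem with hg
  have hgker : g.ker = ⊥ := by
    rw [Submodule.eq_bot_iff]
    intro x hx
    have hx' : g x = 0 := hx
    have : hhat x = hhat 0 := by
      have := congrArg (Subtype.val) hx'
      simpa [hg] using this
    exact hinj this
  have hgrange : g.range = ⊤ := by
    rw [Submodule.eq_top_iff']
    rintro ⟨y, hy⟩
    rw [hKeq] at hy
    obtain ⟨x, hx⟩ := hy
    exact ⟨x, Subtype.ext (by simpa [hg] using hx)⟩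
  refine ⟨fun u => ContinuousLinearEquiv.refl ℂ (H u),
    ContinuousLinearEquiv.ofBijective g hgker hgrange, ?_, ?_⟩
  · intro x a
    have h1 : ((ContinuousLinearEquiv.ofBijective g hgker hgrange) x :
        PiLp 2 (fun a : {e : E // s e = v} => H (r a.1))) = hhat x := by
      rw [ContinuousLinearEquiv.coeFn_ofBijective]
      simp [hg]
    rw [h1, hhh]
    rfl
  · intro e he x
    rfl
end

section
/- Let Γ be a finite quiver with sink v and let (H,f) be an indecomposable Hilbert representation which is closed at v and satisfies Φ_v⁺(H,f) ≠ 0. Then Φ_v⁺(H,f) is indecomposable and (H,f) ≅ Φ_v⁻(Φ_v⁺(H,f)). -/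
private def rfpCastEnd {V : Type} (H : V → Type) [∀ u, NormedAddCommGroup (H u)]
    [∀ u, InnerProductSpace ℂ (H u)] {u w : V} (e : u = w)
    (Q : H u →L[ℂ] H u) : H w →L[ℂ] H w := e ▸ Q

private lemma rfpCastEnd_apply {V : Type} (H : V → Type) [∀ u, NormedAddCommGroup (H u)]
    [∀ u, InnerProductSpace ℂ (H u)] {u w : V} (e : u = w)
    (Q : H u →L[ℂ] H u) (z : H w) :
    rfpCastEnd H e Q z = e ▸ (Q (e.symm ▸ z)) := by subst e; rfl

private lemma rfp_cast_cast {V : Type} (H : V → Type) {u w : V} (e : u = w) (z : H u) :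
    (e.symm ▸ ((e ▸ z : H w)) : H u) = z := by subst e; rfl

private lemma rfp_cast_zero {V : Type} (H : V → Type) [∀ u, NormedAddCommGroup (H u)]
    {u w : V} (e : u = w) : ((e ▸ (0 : H u)) : H w) = 0 := by subst e; rfl




/-- Let `v` be a sink of a finite quiver and `(H,f)` an indecomposable
Hilbert representation which is closed at `v` and satisfies `Φᵥ⁺(H,f) ≠ 0`.  Then
`Φᵥ⁺(H,f)` (vertex space `Ker h_v` at `v`, reversed-arrow operators the coordinate maps
`f⁺_{ᾱ} = P_α ∘ i_v`, other data unchanged) is indecomposable, i.e. its only idempotent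
endomorphisms are `0` and `I`, and `(H,f) ≅ Φᵥ⁻(Φᵥ⁺(H,f))`. -/
theorem reflection_functor_preserves_indecomposability_at_sink
    {V E : Type} [Fintype V] [Fintype E] [DecidableEq V] [DecidableEq E] (s r : E → V)
    (H : V → Type) [∀ u, NormedAddCommGroup (H u)] [∀ u, InnerProductSpace ℂ (H u)]
    [∀ u, CompleteSpace (H u)]
    (f : ∀ e, H (s e) →L[ℂ] H (r e)) (v : V)
    (hsink : ∀ e, s e ≠ v)
    (h : PiLp 2 (fun a : {e : E // r e = v} => H (s a.1)) →L[ℂ] H v)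
    (hh : ∀ x, h x = ∑ a : {e : E // r e = v}, (a.2 ▸ (f a.1 (x a)) : H v))
    (hclosed : IsClosed (LinearMap.range h.toLinearMap : Set (H v)))
    -- `(H,f)` is nonzero:
    (hnz : ¬ ∀ u, ∀ x : H u, x = 0)
    -- `(H,f)` is indecomposable: its only idempotent endomorphisms are `0` and `I`:
    (hindec : ∀ T : ∀ u, H u →L[ℂ] H u,
      (∀ e x, T (r e) (f e x) = f e (T (s e) x)) →
      (∀ u, (T u).comp (T u) = T u) →
      (∀ u, T u = 0) ∨ (∀ u, T u = ContinuousLinearMap.id ℂ (H u)))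
    -- `Φᵥ⁺(H,f) ≠ 0`:
    (hne : ¬ ((∀ x : ↥(LinearMap.ker h.toLinearMap), x = 0) ∧ ∀ u, u ≠ v → ∀ x : H u, x = 0)) :
    -- `Φᵥ⁺(H,f)` is indecomposable:
    (∀ (Tv : ↥(LinearMap.ker h.toLinearMap) →L[ℂ] ↥(LinearMap.ker h.toLinearMap)) (T : ∀ u, H u →L[ℂ] H u),
      (∀ (a : {e : E // r e = v}) (k : ↥(LinearMap.ker h.toLinearMap)),
        T (s a.1) ((k : PiLp 2 (fun b : {e : E // r e = v} => H (s b.1))) a)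
          = ((Tv k : ↥(LinearMap.ker h.toLinearMap)) :
              PiLp 2 (fun b : {e : E // r e = v} => H (s b.1))) a) →
      (∀ e : E, r e ≠ v → ∀ x, T (r e) (f e x) = f e (T (s e) x)) →
      Tv.comp Tv = Tv →
      (∀ u, u ≠ v → (T u).comp (T u) = T u) →
      ((Tv = 0 ∧ ∀ u, u ≠ v → T u = 0) ∨
        (Tv = ContinuousLinearMap.id ℂ ↥(LinearMap.ker h.toLinearMap) ∧
          ∀ u, u ≠ v → T u = ContinuousLinearMap.id ℂ (H u)))) ∧
    -- `(H,f) ≅ Φᵥ⁻(Φᵥ⁺(H,f))`: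
    (∃ (φ : ∀ u, H u ≃L[ℂ] H u) (φv : H v ≃L[ℂ] ↥((LinearMap.ker h.toLinearMap)ᗮ)),
      (∀ (a : {e : E // r e = v}) (x : H (s a.1)),
        ((WithLp.equiv 2 (∀ b : {e : E // r e = v}, H (s b.1))).symm
            (Pi.single a (φ (s a.1) x)) -
          (φv (a.2 ▸ (f a.1 x) : H v) :
            PiLp 2 (fun a : {e : E // r e = v} => H (s a.1)))) ∈ LinearMap.ker h.toLinearMap) ∧
      ∀ e : E, r e ≠ v → ∀ x, φ (r e) (f e x) = f e (φ (s e) x)) := by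
  classical
  have hsingle : ∀ (a : {e : E // r e = v}) (x : H (s a.1)),
      h ((WithLp.equiv 2 (∀ b : {e : E // r e = v}, H (s b.1))).symm (Pi.single a x))
        = a.2 ▸ (f a.1 x) := by
    intro a x
    rw [hh]
    rw [Finset.sum_eq_single a]
    · show (a.2 ▸ (f a.1 ((Pi.single a x : ∀ b : {e : E // r e = v}, H (s b.1)) a)) : H v)
          = a.2 ▸ (f a.1 x)
      rw [Pi.single_eq_same]
    · intro b _ hb
      show (b.2 ▸ (f b.1 ((Pi.single a x : ∀ b : {e : E // r e = v}, H (s b.1)) b)) : H v) = 0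
      rw [Pi.single_eq_of_ne hb, map_zero]
      exact rfp_cast_zero H b.2
    · intro hb; exact absurd (Finset.mem_univ a) hb
  -- surjectivity of h
  haveI : CompleteSpace (LinearMap.range h.toLinearMap) := hclosed.completeSpace_coe
  have hPy : ∀ y ∈ LinearMap.range h.toLinearMap,
      ((LinearMap.range h.toLinearMap).subtypeL.comp (Submodule.orthogonalProjectionOnto (LinearMap.range h.toLinearMap))) y = y :=
    fun y hy => Submodule.starProjection_eq_self_iff.mpr hy
  set P : H v →L[ℂ] H v :=
    (LinearMap.range h.toLinearMap).subtypeL.comp (Submodule.orthogonalProjectionOnto (LinearMap.range h.toLinearMap)) with hPdef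
  have hsurj : ∀ y : H v, ∃ x, h x = y := by
    set S : ∀ u, H u →L[ℂ] H u := fun u =>
      if hu : u = v then rfpCastEnd H hu.symm P else ContinuousLinearMap.id ℂ (H u) with hSdef
    have hSv : S v = P := dif_pos rfl
    have hSne : ∀ u, u ≠ v → S u = ContinuousLinearMap.id ℂ (H u) := fun u hu => dif_neg hu
    have hcomm : ∀ e x, S (r e) (f e x) = f e (S (s e) x) := by
      intro e x
      rw [hSne (s e) (hsink e)]
      by_cases hre : r e = v
      · have h1 : S (r e) = rfpCastEnd H hre.symm P := dif_pos hre
        rw [h1, rfpCastEnd_apply]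
        show hre.symm ▸ (P (hre ▸ f e x)) = f e (ContinuousLinearMap.id ℂ (H (s e)) x)
        have hmem : (hre ▸ (f e x) : H v) ∈ LinearMap.range h.toLinearMap := ⟨_, hsingle ⟨e, hre⟩ x⟩
        rw [hPy _ hmem]
        exact rfp_cast_cast H hre (f e x)
      · rw [hSne (r e) hre]; rfl
    have hid : ∀ u, (S u).comp (S u) = S u := by
      intro u
      by_cases hu : u = v
      · subst hu
        rw [hSv]
        ext y
        exact hPy _ (Submodule.orthogonalProjectionOnto (LinearMap.range h.toLinearMap) y).2
      · rw [hSne u hu]; rfl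
    rcases hindec S hcomm hid with hz | hi
    · exfalso
      apply hne
      have hzero : ∀ u, u ≠ v → ∀ x : H u, x = 0 := by
        intro u hu x
        have : ContinuousLinearMap.id ℂ (H u) = 0 := by rw [← hSne u hu, hz u]
        calc x = ContinuousLinearMap.id ℂ (H u) x := rfl
        _ = (0 : H u →L[ℂ] H u) x := by rw [this]
        _ = 0 := rfl
      refine ⟨fun k => ?_, hzero⟩
      apply Subtype.ext
      apply WithLp.ofLp_injective 2
      apply funext
      intro a
      exact hzero (s a.1) (hsink a.1) _
    · intro y
      have hPyy : P y = y := by rw [← hSv, hi v]; rfl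
      obtain ⟨x, hx⟩ := (Submodule.orthogonalProjectionOnto (LinearMap.range h.toLinearMap) y).2
      exact ⟨x, hx.trans hPyy⟩
  -- setup for Φ⁻
  haveI hXc : CompleteSpace (PiLp 2 (fun a : {e : E // r e = v} => H (s a.1))) :=
    (inferInstance : CompleteSpace (PiLp 2 (fun a : {e : E // r e = v} => H (s a.1))))
  haveI hKc : CompleteSpace (LinearMap.ker h.toLinearMap) := (ContinuousLinearMap.isClosed_ker h).completeSpace_coe
  haveI hKoc : CompleteSpace ((LinearMap.ker h.toLinearMap)ᗮ) :=
    (Submodule.isClosed_orthogonal (LinearMap.ker h.toLinearMap)).completeSpace_coe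
  set g : ((LinearMap.ker h.toLinearMap)ᗮ : Submodule ℂ _) →L[ℂ] H v :=
    h.comp (LinearMap.ker h.toLinearMap)ᗮ.subtypeL with hgdef
  have hginj : LinearMap.ker g.toLinearMap = ⊥ := by
    rw [LinearMap.ker_eq_bot']
    intro z hz
    have hzK : (z : PiLp 2 (fun a : {e : E // r e = v} => H (s a.1))) ∈ LinearMap.ker h.toLinearMap := hz
    have := Submodule.inf_orthogonal_eq_bot (LinearMap.ker h.toLinearMap)
    have hz0 : (z : PiLp 2 (fun a : {e : E // r e = v} => H (s a.1))) = 0 := by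
      have hmem : (z : PiLp 2 (fun a : {e : E // r e = v} => H (s a.1)))
          ∈ (LinearMap.ker h.toLinearMap ⊓ (LinearMap.ker h.toLinearMap)ᗮ) := ⟨hzK, z.2⟩
      rw [this] at hmem
      exact hmem
    exact Subtype.ext hz0
  have hgsurj : LinearMap.range g.toLinearMap = ⊤ := by
    rw [LinearMap.range_eq_top]
    intro y
    obtain ⟨x, hx⟩ := hsurj y
    obtain ⟨k, hk, p, hp, hxkp⟩ := Submodule.exists_add_mem_mem_orthogonal (K := LinearMap.ker h.toLinearMap) x
    refine ⟨⟨p, hp⟩, ?_⟩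
    show h p = y
    have : h x = h k + h p := by rw [hxkp, map_add]
    rw [show h k = 0 from hk, zero_add] at this
    rw [← this, hx]
  set eqv : ((LinearMap.ker h.toLinearMap)ᗮ : Submodule ℂ _) ≃L[ℂ] H v :=
    ContinuousLinearEquiv.ofBijective g hginj hgsurj with heqv
  have hgy : ∀ y, h ((eqv.symm y : ((LinearMap.ker h.toLinearMap)ᗮ : Submodule ℂ _))
      : PiLp 2 (fun a : {e : E // r e = v} => H (s a.1))) = y :=
    fun y => eqv.apply_symm_apply y
  constructor
  · intro Tv T hc1 hc2 hTv2 hT2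
    have Xext : ∀ {x y : PiLp 2 (fun a : {e : E // r e = v} => H (s a.1))},
        (∀ a, x a = y a) → x = y := fun hxy => WithLp.ofLp_injective 2 (funext hxy)
    obtain ⟨Th, hTh⟩ : ∃ Th : PiLp 2 (fun a : {e : E // r e = v} => H (s a.1)) →L[ℂ]
        PiLp 2 (fun a : {e : E // r e = v} => H (s a.1)),
        ∀ (x) (a : {e : E // r e = v}), Th x a = T (s a.1) (x a) := by
      refine ⟨((PiLp.continuousLinearEquiv 2 ℂ
          (fun a : {e : E // r e = v} => H (s a.1))).symm.toContinuousLinearMap).comp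
        ((ContinuousLinearMap.pi fun a : {e : E // r e = v} => (T (s a.1)).comp
          ((ContinuousLinearMap.proj a).comp (PiLp.continuousLinearEquiv 2 ℂ
            (fun a : {e : E // r e = v} => H (s a.1))).toContinuousLinearMap))),
        fun x a => rfl⟩
    have hThK : ∀ (x) (hx : x ∈ LinearMap.ker h.toLinearMap),
        Th x = ((Tv ⟨x, hx⟩ : LinearMap.ker h.toLinearMap) :
          PiLp 2 (fun a : {e : E // r e = v} => H (s a.1))) := by
      intro x hx
      exact Xext fun a => by rw [hTh]; exact hc1 a ⟨x, hx⟩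
    obtain ⟨Tv', hTv'app⟩ : ∃ Tv' : H v →L[ℂ] H v, ∀ y, Tv' y
        = h (Th ((eqv.symm y : ((LinearMap.ker h.toLinearMap)ᗮ : Submodule ℂ _))
          : PiLp 2 (fun a : {e : E // r e = v} => H (s a.1)))) :=
      ⟨(h.comp (Th.comp (LinearMap.ker h.toLinearMap)ᗮ.subtypeL)).comp
        eqv.symm.toContinuousLinearMap, fun y => rfl⟩
    have hTvh : ∀ x, Tv' (h x) = h (Th x) := by
      intro x
      have hd : x - ((eqv.symm (h x)) : PiLp 2 (fun a : {e : E // r e = v} => H (s a.1)))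
          ∈ LinearMap.ker h.toLinearMap := by
        rw [LinearMap.mem_ker, ContinuousLinearMap.coe_coe, map_sub, hgy (h x), sub_self]
      have h0 : h (Th (x - ((eqv.symm (h x))
          : PiLp 2 (fun a : {e : E // r e = v} => H (s a.1))))) = 0 := by
        rw [hThK _ hd]; exact (Tv ⟨_, hd⟩).2
      rw [map_sub, map_sub] at h0
      rw [hTv'app]
      exact (sub_eq_zero.mp h0).symm
    obtain ⟨T', hT'def⟩ : ∃ T' : ∀ u, H u →L[ℂ] H u, T' = fun u =>
        if hu : u = v then rfpCastEnd H hu.symm Tv' else T u := ⟨_, rfl⟩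
    have hT'v : T' v = Tv' := by rw [hT'def]; exact dif_pos rfl
    have hT'ne : ∀ u, u ≠ v → T' u = T u := fun u hu => by rw [hT'def]; exact dif_neg hu
    have hcomm' : ∀ e x, T' (r e) (f e x) = f e (T' (s e) x) := by
      intro e x
      rw [hT'ne (s e) (hsink e)]
      by_cases hre : r e = v
      · have h1 : T' (r e) = rfpCastEnd H hre.symm Tv' := by
          rw [hT'def]; exact dif_pos hre
        rw [h1, rfpCastEnd_apply]
        show hre.symm ▸ (Tv' (hre ▸ f e x)) = f e (T (s e) x)
        have e1 : (hre ▸ (f e x) : H v)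
            = h ((WithLp.equiv 2 (∀ b : {e : E // r e = v}, H (s b.1))).symm
                (Pi.single ⟨e, hre⟩ x)) := (hsingle ⟨e, hre⟩ x).symm
        rw [e1, hTvh]
        have e2 : Th ((WithLp.equiv 2 (∀ b : {e : E // r e = v}, H (s b.1))).symm
              (Pi.single ⟨e, hre⟩ x))
            = (WithLp.equiv 2 (∀ b : {e : E // r e = v}, H (s b.1))).symm
              (Pi.single ⟨e, hre⟩ (T (s e) x)) := by
          refine Xext fun b => ?_
          rw [hTh]
          by_cases hb : b = (⟨e, hre⟩ : {e : E // r e = v})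
          · subst hb
            show T (s e) ((Pi.single (⟨e, hre⟩ : {e : E // r e = v}) x
                  : ∀ b : {e : E // r e = v}, H (s b.1)) ⟨e, hre⟩)
                = (Pi.single (⟨e, hre⟩ : {e : E // r e = v}) (T (s e) x)
                  : ∀ b : {e : E // r e = v}, H (s b.1)) ⟨e, hre⟩
            rw [Pi.single_eq_same, Pi.single_eq_same]
          · show T (s b.1) ((Pi.single ⟨e, hre⟩ x : ∀ b : {e : E // r e = v}, H (s b.1)) b)
                = (Pi.single ⟨e, hre⟩ (T (s e) x) : ∀ b : {e : E // r e = v}, H (s b.1)) b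
            rw [Pi.single_eq_of_ne hb, Pi.single_eq_of_ne hb, map_zero]
        rw [e2, hsingle ⟨e, hre⟩ (T (s e) x)]
        exact rfp_cast_cast H hre (f e (T (s e) x))
      · rw [hT'ne (r e) hre]
        exact hc2 e hre x
    have hid' : ∀ u, (T' u).comp (T' u) = T' u := by
      intro u
      by_cases hu : u = v
      · subst hu
        rw [hT'v]
        ext y
        obtain ⟨x, rfl⟩ := hsurj y
        show Tv' (Tv' (h x)) = Tv' (h x)
        rw [hTvh, hTvh]
        congr 1
        refine Xext fun a => ?_
        rw [hTh, hTh]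
        exact ContinuousLinearMap.ext_iff.mp (hT2 (s a.1) (hsink a.1)) (x a)
      · rw [hT'ne u hu]
        exact hT2 u hu
    rcases hindec T' hcomm' hid' with hz | hi
    · left
      have hTzero : ∀ u, u ≠ v → T u = 0 := fun u hu => by rw [← hT'ne u hu, hz u]
      refine ⟨?_, hTzero⟩
      refine ContinuousLinearMap.ext fun k => ?_
      refine Subtype.ext (Xext fun a => ?_)
      have := (hc1 a k).symm
      rw [hTzero (s a.1) (hsink a.1)] at this
      rw [this]
      rfl
    · right
      have hTid : ∀ u, u ≠ v → T u = ContinuousLinearMap.id ℂ (H u) :=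
        fun u hu => by rw [← hT'ne u hu, hi u]
      refine ⟨?_, hTid⟩
      refine ContinuousLinearMap.ext fun k => ?_
      refine Subtype.ext (Xext fun a => ?_)
      have := (hc1 a k).symm
      rw [hTid (s a.1) (hsink a.1)] at this
      rw [this]
      rfl
  · refine ⟨fun u => ContinuousLinearEquiv.refl ℂ (H u), eqv.symm, ?_, ?_⟩
    · intro a x
      rw [LinearMap.mem_ker, ContinuousLinearMap.coe_coe, map_sub]
      have h1 : h ((WithLp.equiv 2 (∀ b : {e : E // r e = v}, H (s b.1))).symm
          (Pi.single a ((ContinuousLinearEquiv.refl ℂ (H (s a.1))) x))) = a.2 ▸ (f a.1 x) :=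
        hsingle a x
      rw [h1, hgy]
      exact sub_self _
    · intro e _ x
      rfl
end
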